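/- Let M, N ≥ 1, set k = M²N², and let ρ be a density matrix on ℂ^M ⊗ ℂ^N. Let ε', δ' > 0. Suppose there exist p̃_i ≥ 0 with Σ_j p̃_j > 0 and nonzero vectors α̃_i ∈ ℂ^M, β̃_i ∈ ℂ^N (i = 1,…,k) such that (i) |1 − ‖α̃_i‖² · ‖β̃_i‖² · Σ_{j=1}^{k} p̃_j| < ε' for every i, and (ii) ‖ρ − σ̃‖₂ < δ', where σ̃ = Σ_i p̃_i (α̃_i α̃_iᴴ) ⊗ (β̃_i β̃_iᴴ). Then there exists a separable state σ̂ ∈ S_{M,N} with ‖ρ − σ̂‖₂ < δ' + ε'. -/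

import Mathlib

open scoped Matrix Kronecker BigOperators ComplexOrder

/-- The rank-one matrix `a aᴴ` with `(j,k)` entry `a j * conj (a k)`. -/
noncomputable def outer {M : ℕ} (a : Fin M → ℂ) : Matrix (Fin M) (Fin M) ℂ :=
  Matrix.vecMulVec a (fun k => (starRingEnd ℂ) (a k))

/-- The pure product density matrix `(a aᴴ) ⊗ (b bᴴ)`. -/
noncomputable def prodState {M N : ℕ} (a : Fin M → ℂ) (b : Fin N → ℂ) :
    Matrix (Fin M × Fin N) (Fin M × Fin N) ℂ :=
  outer a ⊗ₖ outer b

/-- `a` is a unit vector (squared Euclidean norm equal to 1). -/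
def unitVec {M : ℕ} (a : Fin M → ℂ) : Prop := ∑ j, Complex.normSq (a j) = 1

/-- The set of separable states: the real convex hull of pure product density matrices. -/
noncomputable def SepSet (M N : ℕ) : Set (Matrix (Fin M × Fin N) (Fin M × Fin N) ℂ) :=
  convexHull ℝ { X | ∃ a b, unitVec a ∧ unitVec b ∧ X = prodState a b }

/-- The Frobenius (Hilbert–Schmidt) norm `√(tr(Xᴴ X))`. -/
noncomputable def frobNorm {n : Type*} [Fintype n] (X : Matrix n n ℂ) : ℝ :=
  Real.sqrt ((Matrix.trace (Xᴴ * X)).re)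

attribute [local instance] Matrix.frobeniusSeminormedAddCommGroup
  Matrix.frobeniusNormedAddCommGroup Matrix.frobeniusNormedSpace

lemma frob_sq {n : Type*} [Fintype n] (X : Matrix n n ℂ) :
    (Matrix.trace (Xᴴ * X)).re = ∑ i, ∑ j, Complex.normSq (X i j) := by
  simp only [Matrix.trace, Matrix.diag, Matrix.mul_apply, Matrix.conjTranspose_apply,
    Complex.re_sum]
  rw [Finset.sum_comm]
  congr 1; ext i; congr 1; ext j
  rw [Complex.normSq_apply]
  simp [Complex.mul_re, Complex.conj_re, Complex.conj_im]

lemma frobNorm_eq_norm {n : Type*} [Fintype n] (X : Matrix n n ℂ) :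
    frobNorm X = ‖X‖ := by
  rw [frobNorm, frob_sq, Matrix.frobenius_norm_def, Real.sqrt_eq_rpow]
  congr 1
  congr 1; ext i; congr 1; ext j
  rw [← Complex.sq_norm, ← Real.rpow_natCast]
  norm_num

lemma prodState_apply {M N : ℕ} (a : Fin M → ℂ) (b : Fin N → ℂ) (p q : Fin M × Fin N) :
    prodState a b p q = (a p.1 * (starRingEnd ℂ) (a q.1)) * (b p.2 * (starRingEnd ℂ) (b q.2)) := by
  rfl

lemma sum_normSq_prodState {M N : ℕ} (a : Fin M → ℂ) (b : Fin N → ℂ) :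
    ∑ p, ∑ q, Complex.normSq (prodState a b p q)
      = ((∑ j, Complex.normSq (a j)) * ∑ l, Complex.normSq (b l)) ^ 2 := by
  simp only [prodState_apply, map_mul, Complex.normSq_conj]
  rw [Fintype.sum_prod_type]
  simp only [Fintype.sum_prod_type]
  simp only [← Finset.sum_mul, ← Finset.mul_sum]
  ring

lemma norm_prodState {M N : ℕ} {a : Fin M → ℂ} {b : Fin N → ℂ}
    (ha : unitVec a) (hb : unitVec b) : ‖prodState a b‖ = 1 := by
  rw [← frobNorm_eq_norm, frobNorm, frob_sq, sum_normSq_prodState, ha, hb]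
  norm_num

lemma outer_smul {M : ℕ} (r : ℂ) (a : Fin M → ℂ) :
    outer (r • a) = (Complex.normSq r : ℂ) • outer a := by
  ext j k
  simp [outer, Matrix.vecMulVec_apply, Complex.normSq_eq_conj_mul_self]
  ring

lemma real_smul_matrix {n : Type*} (r : ℝ) (X : Matrix n n ℂ) :
    r • X = ((r : ℂ)) • X := by
  ext i j
  simp [Matrix.smul_apply, Complex.real_smul]

lemma prodState_smul {M N : ℕ} (r s : ℂ) (a : Fin M → ℂ) (b : Fin N → ℂ) :
    prodState (r • a) (s • b)
      = (Complex.normSq r * Complex.normSq s) • prodState a b := by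
  rw [prodState, outer_smul, outer_smul, Matrix.smul_kronecker, Matrix.kronecker_smul,
    smul_smul, prodState, real_smul_matrix]
  norm_num

theorem qsep_yes_certificate_correctness
    (M N : ℕ) (hM : 1 ≤ M) (hN : 1 ≤ N)
    (ρ : Matrix (Fin M × Fin N) (Fin M × Fin N) ℂ)
    (hρ : ρ.PosSemidef ∧ ρ.trace = 1)
    (ε' δ' : ℝ) (hε : 0 < ε') (hδ : 0 < δ')
    (qt : Fin (M ^ 2 * N ^ 2) → ℝ) (hqt : ∀ i, 0 ≤ qt i) (hsum : 0 < ∑ j, qt j)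
    (αt : Fin (M ^ 2 * N ^ 2) → Fin M → ℂ) (βt : Fin (M ^ 2 * N ^ 2) → Fin N → ℂ)
    (hαne : ∀ i, αt i ≠ 0) (hβne : ∀ i, βt i ≠ 0)
    (h1 : ∀ i, |1 - (∑ j, Complex.normSq (αt i j)) * (∑ l, Complex.normSq (βt i l))
        * ∑ j, qt j| < ε')
    (h2 : frobNorm (ρ - ∑ i, qt i • prodState (αt i) (βt i)) < δ') :
    ∃ σ ∈ SepSet M N, frobNorm (ρ - σ) < δ' + ε' := by
  have hA : ∀ i, 0 < ∑ j, Complex.normSq (αt i j) := by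
    intro i
    apply Finset.sum_pos'
    · intro j _; exact Complex.normSq_nonneg _
    · obtain ⟨j, hj⟩ := Function.ne_iff.mp (hαne i)
      exact ⟨j, Finset.mem_univ j, Complex.normSq_pos.mpr hj⟩
  have hB : ∀ i, 0 < ∑ l, Complex.normSq (βt i l) := by
    intro i
    apply Finset.sum_pos'
    · intro l _; exact Complex.normSq_nonneg _
    · obtain ⟨l, hl⟩ := Function.ne_iff.mp (hβne i)
      exact ⟨l, Finset.mem_univ l, Complex.normSq_pos.mpr hl⟩
  set S : ℝ := ∑ j, qt j with hS
  have hSne : S ≠ 0 := hsum.ne'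
  set c : Fin (M ^ 2 * N ^ 2) → ℝ :=
    fun i => (∑ j, Complex.normSq (αt i j)) * (∑ l, Complex.normSq (βt i l)) with hc
  have hcpos : ∀ i, 0 < c i := fun i => mul_pos (hA i) (hB i)
  have h1' : ∀ i, |1 - c i * S| < ε' := fun i => h1 i
  set na : Fin (M ^ 2 * N ^ 2) → ℝ :=
    fun i => Real.sqrt (∑ j, Complex.normSq (αt i j)) with hna
  set nb : Fin (M ^ 2 * N ^ 2) → ℝ :=
    fun i => Real.sqrt (∑ l, Complex.normSq (βt i l)) with hnb
  have hnapos : ∀ i, 0 < na i := fun i => Real.sqrt_pos.mpr (hA i)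
  have hnbpos : ∀ i, 0 < nb i := fun i => Real.sqrt_pos.mpr (hB i)
  set ah : Fin (M ^ 2 * N ^ 2) → Fin M → ℂ := fun i => ((na i : ℂ))⁻¹ • αt i with hah
  set bh : Fin (M ^ 2 * N ^ 2) → Fin N → ℂ := fun i => ((nb i : ℂ))⁻¹ • βt i with hbh
  have hua : ∀ i, unitVec (ah i) := by
    intro i
    have h : ∀ j, Complex.normSq (ah i j) = (na i ^ 2)⁻¹ * Complex.normSq (αt i j) := by
      intro j
      simp [hah, map_mul, Complex.normSq_inv, Complex.normSq_ofReal, sq]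
    simp only [unitVec, h, ← Finset.mul_sum]
    rw [hna, Real.sq_sqrt (hA i).le]
    exact inv_mul_cancel₀ (hA i).ne'
  have hub : ∀ i, unitVec (bh i) := by
    intro i
    have h : ∀ l, Complex.normSq (bh i l) = (nb i ^ 2)⁻¹ * Complex.normSq (βt i l) := by
      intro l
      simp [hbh, map_mul, Complex.normSq_inv, Complex.normSq_ofReal, sq]
    simp only [unitVec, h, ← Finset.mul_sum]
    rw [hnb, Real.sq_sqrt (hB i).le]
    exact inv_mul_cancel₀ (hB i).ne'
  have hrescale : ∀ i, prodState (αt i) (βt i) = c i • prodState (ah i) (bh i) := by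
    intro i
    have ha' : αt i = (na i : ℂ) • ah i := by
      rw [hah, smul_smul, mul_inv_cancel₀, one_smul]
      exact_mod_cast (hnapos i).ne'
    have hb' : βt i = (nb i : ℂ) • bh i := by
      rw [hbh, smul_smul, mul_inv_cancel₀, one_smul]
      exact_mod_cast (hnbpos i).ne'
    conv_lhs => rw [ha', hb']
    rw [prodState_smul]
    congr 1
    simp [hc, Complex.normSq_ofReal, hna, hnb, Real.sq_sqrt (hA _).le, Real.sq_sqrt (hB _).le,
      ← sq]
  set w : Fin (M ^ 2 * N ^ 2) → ℝ := fun i => qt i * c i with hw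
  have hwnn : ∀ i, 0 ≤ w i := fun i => mul_nonneg (hqt i) (hcpos i).le
  obtain ⟨i0, hi0⟩ : ∃ i, 0 < qt i := by
    by_contra h
    push_neg at h
    have h0 : S = 0 := le_antisymm
      (Finset.sum_nonpos fun i _ => h i) (Finset.sum_nonneg fun i _ => hqt i)
    exact hSne h0
  set W : ℝ := ∑ i, w i with hW
  have hWpos : 0 < W := Finset.sum_pos' (fun i _ => hwnn i)
    ⟨i0, Finset.mem_univ i0, mul_pos hi0 (hcpos i0)⟩
  set Pi : Fin (M ^ 2 * N ^ 2) → Matrix (Fin M × Fin N) (Fin M × Fin N) ℂ :=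
    fun i => prodState (ah i) (bh i) with hPi
  set σt : Matrix (Fin M × Fin N) (Fin M × Fin N) ℂ := ∑ i, qt i • prodState (αt i) (βt i)
    with hσt
  have hσtw : σt = ∑ i, w i • Pi i := by
    rw [hσt]
    refine Finset.sum_congr rfl fun i _ => ?_
    rw [hrescale i, smul_smul]
  set σh : Matrix (Fin M × Fin N) (Fin M × Fin N) ℂ := W⁻¹ • σt with hσh
  have hmem : σh ∈ SepSet M N := by
    rw [SepSet]
    have h := Finset.centerMass_mem_convexHull (Finset.univ : Finset (Fin (M ^ 2 * N ^ 2)))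
      (w := w) (fun i _ => hwnn i) hWpos
      (z := Pi) (s := { X | ∃ a b, unitVec a ∧ unitVec b ∧ X = prodState a b })
      (fun i _ => ⟨ah i, bh i, hua i, hub i, rfl⟩)
    rwa [Finset.centerMass, ← hW, ← hσtw, ← hσh] at h
  refine ⟨σh, hmem, ?_⟩
  have hσtnorm : ‖σt‖ ≤ W := by
    rw [hσtw]
    calc ‖∑ i, w i • Pi i‖ ≤ ∑ i, ‖w i • Pi i‖ := norm_sum_le _ _
    _ = ∑ i, w i := by
        refine Finset.sum_congr rfl fun i _ => ?_
        rw [norm_smul, hPi, norm_prodState (hua i) (hub i), Real.norm_eq_abs,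
          abs_of_nonneg (hwnn i), mul_one]
    _ = W := hW.symm
  have hWclose : |W - 1| < ε' := by
    have hexp : W - 1 = ∑ i, (qt i / S) * (c i * S - 1) := by
      symm
      calc ∑ i, (qt i / S) * (c i * S - 1)
          = ∑ i, (qt i * c i - qt i / S) := by
            refine Finset.sum_congr rfl fun i _ => ?_
            field_simp
        _ = (∑ i, qt i * c i) - ∑ i, qt i / S := Finset.sum_sub_distrib _ _
        _ = W - 1 := by rw [← Finset.sum_div, ← hS, div_self hSne, hW, hw]
    rw [hexp]
    calc |∑ i, (qt i / S) * (c i * S - 1)| ≤ ∑ i, |(qt i / S) * (c i * S - 1)| :=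
          Finset.abs_sum_le_sum_abs _ _
    _ = ∑ i, (qt i / S) * |c i * S - 1| := by
        refine Finset.sum_congr rfl fun i _ => ?_
        rw [abs_mul, abs_of_nonneg (div_nonneg (hqt i) hsum.le)]
    _ < ∑ i, (qt i / S) * ε' := by
        apply Finset.sum_lt_sum
        · intro i _
          have hle : |c i * S - 1| ≤ ε' := by
            rw [abs_sub_comm]; exact (h1' i).le
          exact mul_le_mul_of_nonneg_left hle (div_nonneg (hqt i) hsum.le)
        · refine ⟨i0, Finset.mem_univ i0, ?_⟩
          have hlt : |c i0 * S - 1| < ε' := by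
            rw [abs_sub_comm]; exact h1' i0
          exact mul_lt_mul_of_pos_left hlt (div_pos hi0 hsum)
    _ = ε' := by
        rw [← Finset.sum_mul, ← Finset.sum_div, ← hS, div_self hSne, one_mul]
  have hdiff : ‖σt - σh‖ ≤ |W - 1| := by
    have heq : σt - σh = (1 - W⁻¹) • σt := by
      rw [hσh, sub_smul, one_smul]
    rw [heq, norm_smul, Real.norm_eq_abs]
    calc |1 - W⁻¹| * ‖σt‖ ≤ |1 - W⁻¹| * W :=
          mul_le_mul_of_nonneg_left hσtnorm (abs_nonneg _)
    _ = |W - 1| := by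
        have habs : |1 - W⁻¹| * W = |(1 - W⁻¹) * W| := by
          rw [abs_mul, abs_of_pos hWpos]
        rw [habs]
        congr 1
        field_simp
  rw [frobNorm_eq_norm] at h2 ⊢
  have hsplit : ρ - σh = (ρ - σt) + (σt - σh) := by abel
  rw [hsplit]
  calc ‖(ρ - σt) + (σt - σh)‖ ≤ ‖ρ - σt‖ + ‖σt - σh‖ := norm_add_le _ _
  _ < δ' + ε' := add_lt_add_of_lt_of_le h2 (hdiff.trans hWclose.le)
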